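/- For every positive integer n, the number of subtrees Υ of the infinite binary tree whose set Q of terminal (leaf) nodes satisfies Σ_{t∈Q} |t| ≤ n does not exceed (4e)ⁿ. -/

import Mathlib

open scoped ENNReal

/-- A node of the infinite binary tree `T` is a finite binary string;
its level `|t|` is its length. -/
abbrev Node : Type := List Bool

/-- `μ` belongs to `ℓ₁(T)`, i.e. `Σ_t |μ(t)| < ∞`. -/
def MemL1 (μ : Node → ℝ) : Prop := Summable fun t : Node => |μ t|

/-- The `ℓ₁(T)` norm `‖μ‖₁ = Σ_t |μ(t)|`. -/
noncomputable def l1Norm (μ : Node → ℝ) : ℝ := ∑' t : Node, |μ t|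

/-- `(V*μ)(t) = Σ_{u ⪰ t} μ(u)`, the sum over all nodes `u` having `t` as a prefix
(including `u = t`). -/
noncomputable def Vstar (μ : Node → ℝ) (t : Node) : ℝ := ∑' u : {u : Node // t <+: u}, μ u.1

/-- The weight `w(t) = (1 + |t|)^{-β}`. -/
noncomputable def wgt (β : ℝ) (t : Node) : ℝ := ((1 : ℝ) + (t.length : ℝ)) ^ (-β)

/-- The squared distance of `f, g` in the weighted space `ℓ₂(T,W)`,
`Σ_t w(t) (f(t) - g(t))²`, computed in `ℝ≥0∞`. -/
noncomputable def distSqW (β : ℝ) (f g : Node → ℝ) : ℝ≥0∞ :=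
  ∑' t : Node, ENNReal.ofReal (wgt β t * (f t - g t) ^ 2)

/-- The variation of `μ` at `t`: `‖μ‖(t) = Σ_{u ⪰ t} |μ(u)|`. -/
noncomputable def varAt (μ : Node → ℝ) (t : Node) : ℝ :=
  ∑' u : {u : Node // t <+: u}, |μ u.1|

/-- The `n`-essential subtree `Υ^μ`: starting from the root, a node is included
as long as `‖μ‖(t) > |t|/n`; the construction stops at nodes with `‖μ‖(t) ≤ |t|/n`.
Thus `t ∈ Υ^μ` iff every prefix `s` of `t` (including `t` itself) satisfies
`‖μ‖(s) > |s|/n`. -/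
def essTree (n : ℕ) (μ : Node → ℝ) : Set Node :=
  {t : Node | ∀ s : Node, s <+: t → (s.length : ℝ) / (n : ℝ) < varAt μ s}

/-- The terminal (leaf) nodes of a subtree `Υ`: nodes of `Υ` none of whose children
belongs to `Υ`. -/
def terminalNodes (Υ : Set Node) : Set Node :=
  {t : Node | t ∈ Υ ∧ ∀ b : Bool, t ++ [b] ∉ Υ}

open Classical in
noncomputable def toTree : ℕ → Set Node → BinaryTree Unit
  | 0, _ => BinaryTree.nil
  | (k+1), S =>
    if ([] : Node) ∈ S then
      BinaryTree.node () (toTree k {s | (false :: s) ∈ S}) (toTree k {s | (true :: s) ∈ S})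
    else BinaryTree.nil

def paths : BinaryTree Unit → Set Node
  | BinaryTree.nil => ∅
  | BinaryTree.node _ l r =>
      insert ([] : Node) ((List.cons false '' paths l) ∪ (List.cons true '' paths r))

lemma paths_toTree : ∀ (k : ℕ) (S : Set Node),
    (∀ s t : Node, s <+: t → t ∈ S → s ∈ S) → (∀ s ∈ S, s.length < k) →
    paths (toTree k S) = S := by
  intro k
  induction k with
  | zero =>
    intro S hcl hlen
    have : S = ∅ := by
      ext s; simp only [Set.mem_empty_iff_false, iff_false]
      intro hs; exact absurd (hlen s hs) (by omega)
    simp [toTree, paths, this]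
  | succ k ih =>
    intro S hcl hlen
    by_cases h0 : ([] : Node) ∈ S
    · have hS : toTree (k+1) S =
        BinaryTree.node () (toTree k {s | (false :: s) ∈ S}) (toTree k {s | (true :: s) ∈ S}) := by
        simp [toTree, h0]
      have hb : ∀ b : Bool, paths (toTree k {s | (b :: s) ∈ S}) = {s | (b :: s) ∈ S} := by
        intro b
        refine ih _ (fun s t hst ht => ?_) (fun s hs => ?_)
        · exact hcl (b :: s) (b :: t) (by simpa [List.cons_prefix_cons] using hst) ht
        · have := hlen (b :: s) hs; simp at this ⊢; omega
      rw [hS]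
      show insert ([] : Node) _ = S
      rw [hb false, hb true]
      ext s
      rcases s with _ | ⟨b, s'⟩
      · simp [h0]
      · cases b <;> simp [List.cons_inj_right]
    · have hS : toTree (k+1) S = BinaryTree.nil := by simp [toTree, h0]
      rw [hS]
      show (∅ : Set Node) = S
      ext s; simp only [Set.mem_empty_iff_false, false_iff]
      intro hs
      exact h0 (hcl [] s s.nil_prefix hs)

lemma paths_finite_ncard : ∀ T : BinaryTree Unit, (paths T).Finite ∧ (paths T).ncard = T.numNodes := by
  intro T
  induction T with
  | nil => simp [paths]
  | node _ l r ihl ihr =>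
    obtain ⟨hlf, hlc⟩ := ihl
    obtain ⟨hrf, hrc⟩ := ihr
    have hfl : (List.cons false '' paths l).Finite := hlf.image _
    have hfr : (List.cons true '' paths r).Finite := hrf.image _
    have hdisj : Disjoint (List.cons false '' paths l) (List.cons true '' paths r) := by
      rw [Set.disjoint_left]
      rintro _ ⟨a, _, rfl⟩ ⟨b, _, h⟩
      simp at h
    have hnotmem : ([] : Node) ∉ (List.cons false '' paths l) ∪ (List.cons true '' paths r) := by
      rintro (⟨a, _, h⟩ | ⟨a, _, h⟩) <;> simp at h
    have hp : paths (BinaryTree.node () l r) =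
        insert ([] : Node) ((List.cons false '' paths l) ∪ (List.cons true '' paths r)) := rfl
    constructor
    · rw [hp]; exact ((hfl.union hfr).insert _)
    · rw [hp, Set.ncard_insert_of_notMem hnotmem (hfl.union hfr),
        Set.ncard_union_eq hdisj hfl hfr,
        Set.ncard_image_of_injective _ (List.cons_injective),
        Set.ncard_image_of_injective _ (List.cons_injective), hlc, hrc]
      simp [BinaryTree.numNodes]

lemma exists_terminal_ext {Υ : Set Node} (hfin : Υ.Finite)
    {t : Node} (ht : t ∈ Υ) : ∃ q ∈ terminalNodes Υ, t <+: q := by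
  obtain ⟨q, hqE, hqmax⟩ := Set.Finite.exists_maximalFor List.length {u ∈ Υ | t <+: u}
    (hfin.subset (fun u hu => hu.1)) ⟨t, ht, List.prefix_refl t⟩
  refine ⟨q, ⟨hqE.1, fun b hb => ?_⟩, hqE.2⟩
  have : q ++ [b] ∈ {u ∈ Υ | t <+: u} := ⟨hb, hqE.2.trans (q.prefix_append [b])⟩
  have := hqmax this (by simp)
  simp at this

lemma centralBinom_le_four_pow (k : ℕ) : Nat.centralBinom k ≤ 4 ^ k := by
  have h1 : (2 * k).choose k ≤ ∑ i ∈ Finset.range (2 * k + 1), (2 * k).choose i :=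
    Finset.single_le_sum (f := fun i => (2 * k).choose i)
      (by intro i _; exact Nat.zero_le _) (Finset.mem_range.2 (by omega))
  calc Nat.centralBinom k = (2 * k).choose k := Nat.centralBinom_eq_two_mul_choose k
    _ ≤ ∑ i ∈ Finset.range (2 * k + 1), (2 * k).choose i := h1
    _ = 2 ^ (2 * k) := Nat.sum_range_choose (2 * k)
    _ = 4 ^ k := by rw [pow_mul]; norm_num

lemma catalan_succ_le_four_pow : ∀ m : ℕ, catalan (m + 1) ≤ 4 ^ m
  | 0 => by simp [catalan_one]
  | 1 => by simp [catalan_two]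
  | (m + 2) => by
    have h := succ_mul_catalan_eq_centralBinom (m + 3)
    have h2 : Nat.centralBinom (m + 3) ≤ 4 ^ (m + 3) := centralBinom_le_four_pow _
    have h3 : 4 * catalan (m + 3) ≤ (m + 3 + 1) * catalan (m + 3) :=
      Nat.mul_le_mul_right (catalan (m + 3)) (by omega : 4 ≤ m + 3 + 1)
    have h4 : 4 * catalan (m + 3) ≤ 4 * 4 ^ (m + 2) := by
      calc 4 * catalan (m + 3) ≤ (m + 3 + 1) * catalan (m + 3) := h3
        _ = Nat.centralBinom (m + 3) := h
        _ ≤ 4 ^ (m + 3) := h2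
        _ = 4 * 4 ^ (m + 2) := by ring
    exact Nat.le_of_mul_le_mul_left h4 (by norm_num)

lemma sum_catalan_le : ∀ n : ℕ, 1 ≤ n → ∑ m ∈ Finset.range (n + 2), catalan m ≤ 2 * 4 ^ n := by
  intro n hn
  induction n with
  | zero => omega
  | succ k ih =>
    rcases Nat.eq_or_lt_of_le hn with h | h
    · have hk0 : k = 0 := by omega
      subst hk0
      simp [Finset.sum_range_succ, catalan_zero, catalan_one, catalan_two]
    · have hk : 1 ≤ k := by omega
      rw [Finset.sum_range_succ]
      calc (∑ m ∈ Finset.range (k + 2), catalan m) + catalan (k + 2)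
          ≤ 2 * 4 ^ k + 4 ^ (k + 1) := Nat.add_le_add (ih hk) (catalan_succ_le_four_pow _)
        _ ≤ 2 * 4 ^ (k + 1) := by
            have h4 : (4:ℕ) ^ (k + 1) = 4 * 4 ^ k := by ring
            omega


theorem count_subtrees_le (n : ℕ) (hn : 0 < n) :
    {Υ : Set Node | Υ.Finite ∧ ([] : Node) ∈ Υ ∧
        (∀ t u : Node, t <+: u → u ∈ Υ → t ∈ Υ) ∧
        (∑' t : terminalNodes Υ, (t.1.length : ℝ≥0∞)) ≤ (n : ℝ≥0∞)}.encard ≤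
      ENNReal.ofReal ((4 * Real.exp 1) ^ n) := by
  classical
  set B : Finset (BinaryTree Unit) := (Finset.range (n+2)).biUnion BinaryTree.treesOfNumNodesEq with hB
  set 𝒮 : Set (Set Node) := {Υ : Set Node | Υ.Finite ∧ ([] : Node) ∈ Υ ∧
        (∀ t u : Node, t <+: u → u ∈ Υ → t ∈ Υ) ∧
        (∑' t : terminalNodes Υ, (t.1.length : ℝ≥0∞)) ≤ (n : ℝ≥0∞)} with h𝒮
  have main : ∀ Υ ∈ 𝒮, paths (toTree (n+1) Υ) = Υ ∧ toTree (n+1) Υ ∈ B := by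
    rintro Υ ⟨hfin, hroot, hcl, hsum⟩
    have hQfin : (terminalNodes Υ).Finite := hfin.subset (fun t ht => ht.1)
    have hsum' : ∑ q ∈ hQfin.toFinset, q.length ≤ n := by
      have e1 : (∑' t : terminalNodes Υ, ((t : Node).length : ℝ≥0∞))
          = ∑ q ∈ hQfin.toFinset, ((q.length : ℝ≥0∞)) := by
        rw [← (Equiv.setCongr hQfin.coe_toFinset).tsum_eq
          (fun t : terminalNodes Υ => ((t : Node).length : ℝ≥0∞))]
        exact Finset.tsum_subtype' hQfin.toFinset fun q => ((q.length : ℝ≥0∞))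
      rw [e1] at hsum
      have e2 : ((∑ q ∈ hQfin.toFinset, q.length : ℕ) : ℝ≥0∞)
          = ∑ q ∈ hQfin.toFinset, ((q.length : ℝ≥0∞)) := by push_cast; rfl
      rw [← e2] at hsum
      exact_mod_cast hsum
    have hlen : ∀ t ∈ Υ, t.length ≤ n := by
      intro t ht
      obtain ⟨q, hq, htq⟩ := exists_terminal_ext hfin ht
      have h1 : q.length ≤ ∑ q ∈ hQfin.toFinset, q.length :=
        Finset.single_le_sum (fun i _ => Nat.zero_le _) (hQfin.mem_toFinset.2 hq)
      exact le_trans htq.length_le (le_trans h1 hsum')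
    have hsub : hfin.toFinset ⊆
        insert ([] : Node) (hQfin.toFinset.biUnion fun q => q.inits.toFinset.erase []) := by
      intro t ht
      rw [Set.Finite.mem_toFinset] at ht
      rcases eq_or_ne t [] with rfl | hne
      · exact Finset.mem_insert_self _ _
      · obtain ⟨q, hq, htq⟩ := exists_terminal_ext hfin ht
        refine Finset.mem_insert_of_mem (Finset.mem_biUnion.2
          ⟨q, hQfin.mem_toFinset.2 hq, ?_⟩)
        exact Finset.mem_erase.2 ⟨hne, List.mem_toFinset.2 ((List.mem_inits _ _).2 htq)⟩
    have hcard : Υ.ncard ≤ n + 1 := by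
      rw [Set.ncard_eq_toFinset_card _ hfin]
      calc hfin.toFinset.card
          ≤ (insert ([] : Node)
              (hQfin.toFinset.biUnion fun q => q.inits.toFinset.erase [])).card :=
            Finset.card_le_card hsub
        _ ≤ (hQfin.toFinset.biUnion fun q => q.inits.toFinset.erase []).card + 1 :=
            Finset.card_insert_le _ _
        _ ≤ (∑ q ∈ hQfin.toFinset, (q.inits.toFinset.erase ([] : Node)).card) + 1 :=
            Nat.add_le_add_right (Finset.card_biUnion_le) 1
        _ ≤ (∑ q ∈ hQfin.toFinset, q.length) + 1 := by
            refine Nat.add_le_add_right (Finset.sum_le_sum fun q _ => ?_) 1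
            have hmem : ([] : Node) ∈ q.inits.toFinset :=
              List.mem_toFinset.2 ((List.mem_inits _ _).2 q.nil_prefix)
            rw [Finset.card_erase_of_mem hmem]
            have h2 : q.inits.toFinset.card ≤ q.length + 1 := by
              have := List.toFinset_card_le (l := q.inits)
              rwa [List.length_inits] at this
            omega
        _ ≤ n + 1 := Nat.add_le_add_right hsum' 1
    have hpaths : paths (toTree (n+1) Υ) = Υ :=
      paths_toTree (n+1) Υ hcl (fun s hs => Nat.lt_succ_of_le (hlen s hs))
    refine ⟨hpaths, ?_⟩
    have hnum : (toTree (n+1) Υ).numNodes ≤ n + 1 := by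
      have h := paths_finite_ncard (toTree (n+1) Υ)
      rw [hpaths] at h
      exact h.2 ▸ hcard
    rw [hB]
    exact Finset.mem_biUnion.2 ⟨(toTree (n+1) Υ).numNodes,
      Finset.mem_range.2 (by omega), BinaryTree.mem_treesOfNumNodesEq_numNodes _⟩
  have hinj : Set.InjOn (toTree (n+1)) 𝒮 := by
    intro Υ₁ h₁ Υ₂ h₂ heq
    rw [← (main Υ₁ h₁).1, ← (main Υ₂ h₂).1, heq]
  have hBcard : B.card ≤ 2 * 4 ^ n := by
    refine le_trans Finset.card_biUnion_le ?_
    simpa [BinaryTree.treesOfNumNodesEq_card_eq_catalan] using sum_catalan_le n hn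
  have hencard : 𝒮.encard ≤ ((2 * 4 ^ n : ℕ) : ℕ∞) := by
    calc 𝒮.encard = (toTree (n+1) '' 𝒮).encard := (hinj.encard_image).symm
      _ ≤ (↑B : Set (BinaryTree Unit)).encard :=
          Set.encard_mono (by rintro _ ⟨Υ, hΥ, rfl⟩; exact (main Υ hΥ).2)
      _ = (B.card : ℕ∞) := Set.encard_coe_eq_coe_finsetCard B
      _ ≤ ((2 * 4 ^ n : ℕ) : ℕ∞) := by exact_mod_cast hBcard
  calc (𝒮.encard : ℝ≥0∞) ≤ ((2 * 4 ^ n : ℕ) : ℝ≥0∞) := by exact_mod_cast hencard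
    _ ≤ ENNReal.ofReal ((4 * Real.exp 1) ^ n) := by
        rw [← ENNReal.ofReal_natCast]
        apply ENNReal.ofReal_le_ofReal
        push_cast
        rw [mul_pow]
        have h2 : (2 : ℝ) ≤ Real.exp 1 ^ n := by
          have he : (2 : ℝ) ≤ Real.exp 1 := by
            have := Real.add_one_le_exp (1 : ℝ); linarith
          calc (2:ℝ) ≤ Real.exp 1 := he
            _ ≤ Real.exp 1 ^ n := le_self_pow₀ (Real.one_le_exp (by norm_num)) (by omega)
        have h4 : (0:ℝ) < 4 ^ n := pow_pos (by norm_num) n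
        nlinarith
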